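/- There is an absolute constant c > 0 such that for every field F, every integer d ≥ 2, and every integer Δ with 1 ≤ Δ ≤ log₂ d, there exists a syntactically multilinear arithmetic formula over F of product-depth at most Δ and size at most 2^{c·Δ·d^{1/Δ}} computing the polynomial IMM_d. -/

import Mathlib

open MvPolynomial

/-- The variable set `X = {x^(i)_{u,v}}`: index `i ∈ Fin d`, entries `u,v ∈ Fin 2`
(value `0` of `Fin 2` represents `1`, value `1` represents `2`). -/
abbrev IMMVar (d : ℕ) : Type := Fin d × Fin 2 × Fin 2

/-- The matrix `M^(i)` of variables. -/
noncomputable def IMMMat (F : Type) [CommSemiring F] (d : ℕ) (i : Fin d) :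
    Matrix (Fin 2) (Fin 2) (MvPolynomial (IMMVar d) F) :=
  Matrix.of fun u v => X (i, u, v)

/-- The iterated matrix multiplication polynomial `IMM_d = M(1,1) + M(1,2)`,
where `M = M^(1) ⋯ M^(d)`. -/
noncomputable def IMMPoly (F : Type) [CommSemiring F] (d : ℕ) :
    MvPolynomial (IMMVar d) F :=
  (List.ofFn (IMMMat F d)).prod 0 0 + (List.ofFn (IMMMat F d)).prod 0 1

/-- A polynomial is multilinear if its degree in each variable is at most `1`. -/
def IsMultilinearPoly {F V : Type} [CommSemiring F] (p : MvPolynomial V F) : Prop :=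
  ∀ v, p.degreeOf v ≤ 1

/-- Arithmetic formulas over `F` in variables `V`: leaves are variables or constants,
internal gates are sums or products with a nonempty (finite) family of children. -/
inductive Formula (F : Type) (V : Type) : Type where
  | var : V → Formula F V
  | const : F → Formula F V
  | sum : {n : ℕ} → (Fin (n + 1) → Formula F V) → Formula F V
  | prod : {n : ℕ} → (Fin (n + 1) → Formula F V) → Formula F V

namespace Formula

/-- The polynomial computed by a formula. -/
noncomputable def poly {F V : Type} [CommSemiring F] : Formula F V → MvPolynomial V F
  | .var v => X v
  | .const c => C c
  | .sum ch => ∑ i, (ch i).poly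
  | .prod ch => ∏ i, (ch i).poly

/-- The size of a formula: total number of nodes, including leaves. -/
def size {F V : Type} : Formula F V → ℕ
  | .var _ => 1
  | .const _ => 1
  | .sum ch => 1 + ∑ i, (ch i).size
  | .prod ch => 1 + ∑ i, (ch i).size

/-- Product-depth: the maximum number of product gates on a root-to-leaf path. -/
def productDepth {F V : Type} : Formula F V → ℕ
  | .var _ => 0
  | .const _ => 0
  | .sum ch => Finset.univ.sup fun i => (ch i).productDepth
  | .prod ch => 1 + Finset.univ.sup fun i => (ch i).productDepth

/-- The support of a formula: the set of variables labelling its leaves. -/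
def support {F V : Type} [DecidableEq V] : Formula F V → Finset V
  | .var v => {v}
  | .const _ => ∅
  | .sum ch => Finset.univ.sup fun i => (ch i).support
  | .prod ch => Finset.univ.sup fun i => (ch i).support

/-- Syntactic multilinearity: at every product gate, the supports of distinct
children are pairwise disjoint. -/
def SynMultilinear {F V : Type} [DecidableEq V] : Formula F V → Prop
  | .var _ => True
  | .const _ => True
  | .sum ch => ∀ i, (ch i).SynMultilinear
  | .prod ch => (∀ i, (ch i).SynMultilinear) ∧
      ∀ i j, i ≠ j → Disjoint (ch i).support (ch j).support

/-- Multilinear formula: every subformula computes a multilinear polynomial. -/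
def MultilinearF {F V : Type} [CommSemiring F] : Formula F V → Prop
  | .var v => IsMultilinearPoly (poly (F := F) (.var v))
  | .const c => IsMultilinearPoly (poly (V := V) (.const c))
  | .sum ch => IsMultilinearPoly (poly (.sum ch)) ∧ ∀ i, (ch i).MultilinearF
  | .prod ch => IsMultilinearPoly (poly (.prod ch)) ∧ ∀ i, (ch i).MultilinearF

end Formula

/-! ### Auxiliary construction for STATEMENT 3 -/

namespace IMM3Aux

open Formula

/-- A single product gate over a list of formulas (constant `1` for `[]`). -/
def listProd {F V : Type} [CommSemiring F] : List (Formula F V) → Formula F V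
  | [] => .const 1
  | a :: t => .prod (fun i : Fin (t.length + 1) => (a :: t).get i)

/-- A single sum gate over a list of formulas (constant `0` for `[]`). -/
def listSum {F V : Type} [CommSemiring F] : List (Formula F V) → Formula F V
  | [] => .const 0
  | a :: t => .sum (fun i : Fin (t.length + 1) => (a :: t).get i)

lemma fin_prod_eq_list {M : Type} [CommMonoid M] {α : Type} (l : List α) (f : α → M) :
    (∏ i : Fin l.length, f (l.get i)) = (l.map f).prod := by
  rw [← List.prod_ofFn]
  conv_rhs => rw [← List.ofFn_get l, List.map_ofFn]
  rfl

lemma fin_sum_eq_list {M : Type} [AddCommMonoid M] {α : Type} (l : List α) (f : α → M) :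
    (∑ i : Fin l.length, f (l.get i)) = (l.map f).sum := by
  rw [← List.sum_ofFn]
  conv_rhs => rw [← List.ofFn_get l, List.map_ofFn]
  rfl

lemma poly_listProd {F V : Type} [CommSemiring F] (l : List (Formula F V)) :
    (listProd l).poly = (l.map poly).prod := by
  cases l with
  | nil => simp [listProd, Formula.poly]
  | cons a t =>
    show (∏ i : Fin (t.length + 1), ((a :: t).get i).poly) = _
    exact fin_prod_eq_list (a :: t) poly

lemma poly_listSum {F V : Type} [CommSemiring F] (l : List (Formula F V)) :
    (listSum l).poly = (l.map poly).sum := by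
  cases l with
  | nil => simp [listSum, Formula.poly]
  | cons a t =>
    show (∑ i : Fin (t.length + 1), ((a :: t).get i).poly) = _
    exact fin_sum_eq_list (a :: t) poly

lemma size_listProd {F V : Type} [CommSemiring F] (l : List (Formula F V)) :
    (listProd l).size ≤ 1 + (l.map size).sum := by
  cases l with
  | nil => simp [listProd, Formula.size]
  | cons a t =>
    show 1 + (∑ i : Fin (t.length + 1), ((a :: t).get i).size) ≤ _
    exact Nat.add_le_add_left (le_of_eq (fin_sum_eq_list (a :: t) size)) 1

lemma size_listSum {F V : Type} [CommSemiring F] (l : List (Formula F V)) :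
    (listSum l).size ≤ 1 + (l.map size).sum := by
  cases l with
  | nil => simp [listSum, Formula.size]
  | cons a t =>
    show 1 + (∑ i : Fin (t.length + 1), ((a :: t).get i).size) ≤ _
    exact Nat.add_le_add_left (le_of_eq (fin_sum_eq_list (a :: t) size)) 1

lemma depth_listProd {F V : Type} [CommSemiring F] {l : List (Formula F V)} {n : ℕ}
    (h : ∀ φ ∈ l, φ.productDepth ≤ n) : (listProd l).productDepth ≤ n + 1 := by
  cases l with
  | nil => simp [listProd, Formula.productDepth]
  | cons a t =>
    show 1 + (Finset.univ.sup fun i : Fin (t.length + 1) => ((a :: t).get i).productDepth) ≤ n + 1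
    have : (Finset.univ.sup fun i : Fin (t.length + 1) => ((a :: t).get i).productDepth) ≤ n :=
      Finset.sup_le fun i _ => h _ (List.get_mem _ _)
    omega

lemma depth_listSum {F V : Type} [CommSemiring F] {l : List (Formula F V)} {n : ℕ}
    (h : ∀ φ ∈ l, φ.productDepth ≤ n) : (listSum l).productDepth ≤ n := by
  cases l with
  | nil => simp [listSum, Formula.productDepth]
  | cons a t =>
    show (Finset.univ.sup fun i : Fin (t.length + 1) => ((a :: t).get i).productDepth) ≤ n
    exact Finset.sup_le fun i _ => h _ (List.get_mem _ _)

lemma support_listProd {F V : Type} [CommSemiring F] [DecidableEq V] {l : List (Formula F V)} {x : V}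
    (hx : x ∈ (listProd l).support) : ∃ φ ∈ l, x ∈ φ.support := by
  cases l with
  | nil => simp [listProd, Formula.support] at hx
  | cons a t =>
    have hx' : x ∈ Finset.univ.sup fun i : Fin (t.length + 1) => ((a :: t).get i).support := hx
    obtain ⟨i, _, hi⟩ := Finset.mem_sup.1 hx'
    exact ⟨_, List.get_mem (a :: t) i, hi⟩

lemma support_listSum {F V : Type} [CommSemiring F] [DecidableEq V] {l : List (Formula F V)} {x : V}
    (hx : x ∈ (listSum l).support) : ∃ φ ∈ l, x ∈ φ.support := by
  cases l with
  | nil => simp [listSum, Formula.support] at hx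
  | cons a t =>
    have hx' : x ∈ Finset.univ.sup fun i : Fin (t.length + 1) => ((a :: t).get i).support := hx
    obtain ⟨i, _, hi⟩ := Finset.mem_sup.1 hx'
    exact ⟨_, List.get_mem (a :: t) i, hi⟩

lemma syn_listSum {F V : Type} [CommSemiring F] [DecidableEq V] {l : List (Formula F V)}
    (h : ∀ φ ∈ l, φ.SynMultilinear) : (listSum l).SynMultilinear := by
  cases l with
  | nil => simp [listSum, Formula.SynMultilinear]
  | cons a t =>
    show ∀ i : Fin (t.length + 1), ((a :: t).get i).SynMultilinear
    exact fun i => h _ (List.get_mem _ _)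

lemma syn_listProd {F V : Type} [CommSemiring F] [DecidableEq V] {l : List (Formula F V)}
    (h : ∀ φ ∈ l, φ.SynMultilinear)
    (hd : ∀ i j : Fin l.length, i ≠ j → Disjoint (l.get i).support (l.get j).support) :
    (listProd l).SynMultilinear := by
  cases l with
  | nil => simp [listProd, Formula.SynMultilinear]
  | cons a t =>
    exact ⟨fun i => h _ (List.get_mem _ _), fun i j hij => hd i j hij⟩

/-! ### Chunking a list into blocks -/

def chunks {α : Type} (B : ℕ) : List α → List (List α)
  | [] => []
  | a :: t => (a :: t).take (max B 1) :: chunks B ((a :: t).drop (max B 1))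
  termination_by l => l.length
  decreasing_by
    simp only [List.length_drop, List.length_cons]
    have := Nat.le_max_right B 1
    omega

lemma chunks_flatten {α : Type} (B : ℕ) : ∀ l : List α, (chunks B l).flatten = l
  | [] => by simp [chunks]
  | a :: t => by
    rw [chunks, List.flatten_cons, chunks_flatten B ((a :: t).drop (max B 1))]
    exact List.take_append_drop _ _
  termination_by l => l.length
  decreasing_by
    simp only [List.length_drop, List.length_cons]
    have := Nat.le_max_right B 1
    omega

lemma mem_chunks {α : Type} (B : ℕ) : ∀ (l : List α) (ch : List α), ch ∈ chunks B l →
    ch ≠ [] ∧ ch.length ≤ max B 1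
  | [], ch, h => by simp [chunks] at h
  | a :: t, ch, h => by
    rw [chunks] at h
    rcases List.mem_cons.1 h with h | h
    · subst h
      constructor
      · have : (List.take (max B 1) (a :: t)).length = min (max B 1) (t.length + 1) := by
          simp
        intro hnil
        rw [hnil] at this
        simp at this
        omega
      · exact List.length_take_le _ _
    · exact mem_chunks B _ ch h
  termination_by l => l.length
  decreasing_by
    simp only [List.length_drop, List.length_cons]
    have := Nat.le_max_right B 1
    omega

lemma chunks_length_le {α : Type} {B : ℕ} (hB : 1 ≤ B) :
    ∀ (m : ℕ) (l : List α), l.length ≤ B * m → (chunks B l).length ≤ m := by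
  intro m
  induction m with
  | zero =>
    intro l hl
    rcases List.length_eq_zero_iff.1 (Nat.le_zero.1 (by simpa using hl)) with rfl
    simp [chunks]
  | succ m ih =>
    intro l hl
    cases l with
    | nil => simp [chunks]
    | cons a t =>
      rw [chunks]
      have hmax : max B 1 = B := Nat.max_eq_left hB
      have hdrop : ((a :: t).drop (max B 1)).length ≤ B * m := by
        simp only [List.length_drop, List.length_cons, hmax]
        have : (a :: t).length ≤ B * (m + 1) := hl
        simp only [List.length_cons] at this
        have hBm : B * (m + 1) = B * m + B := by ring
        omega
      have := ih _ hdrop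
      simp only [List.length_cons]
      omega

lemma chunks_nodup_pairwise {α : Type} {B : ℕ} {l : List α} (hl : l.Nodup) :
    (∀ ch ∈ chunks B l, ch.Nodup) ∧ (chunks B l).Pairwise List.Disjoint := by
  have : (chunks B l).flatten.Nodup := by rw [chunks_flatten]; exact hl
  exact List.nodup_flatten.1 this

/-! ### Matrix products and path expansions -/

/-- The product of the variable matrices along a list of indices. -/
noncomputable def Pm (F : Type) [CommSemiring F] (d : ℕ) (ch : List (Fin d)) :
    Matrix (Fin 2) (Fin 2) (MvPolynomial (IMMVar d) F) :=
  (ch.map (IMMMat F d)).prod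

lemma Pm_append (F : Type) [CommSemiring F] (d : ℕ) (l₁ l₂ : List (Fin d)) :
    Pm F d (l₁ ++ l₂) = Pm F d l₁ * Pm F d l₂ := by
  simp [Pm, List.map_append, List.prod_append]

lemma Pm_flatten (F : Type) [CommSemiring F] (d : ℕ) : ∀ chs : List (List (Fin d)),
    ((chs.map (Pm F d)).prod) = Pm F d chs.flatten
  | [] => by simp [Pm]
  | ch :: rest => by
    rw [List.map_cons, List.prod_cons, List.flatten_cons, Pm_append,
      Pm_flatten F d rest]

/-- All products of chunk formulas along paths of intermediate indices. -/
def pathProds {F : Type} {d : ℕ} (g : List (Fin d) → Fin 2 → Fin 2 → Formula F (IMMVar d)) :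
    List (List (Fin d)) → Fin 2 → Fin 2 → List (List (Formula F (IMMVar d)))
  | [], _, _ => []
  | [ch], u, v => [[g ch u v]]
  | ch :: ch' :: rest, u, v =>
      ((pathProds g (ch' :: rest) 0 v).map (g ch u 0 :: ·)) ++
      ((pathProds g (ch' :: rest) 1 v).map (g ch u 1 :: ·))

lemma forall₂_of_mem_pathProds {F : Type} {d : ℕ}
    {g : List (Fin d) → Fin 2 → Fin 2 → Formula F (IMMVar d)} :
    ∀ (chs : List (List (Fin d))) (u v : Fin 2) (pl : List (Formula F (IMMVar d))),
      pl ∈ pathProds g chs u v →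
      List.Forall₂ (fun φ ch => ∃ a b, φ = g ch a b) pl chs
  | [], u, v, pl, h => by simp [pathProds] at h
  | [ch], u, v, pl, h => by
    simp only [pathProds, List.mem_singleton] at h
    subst h
    exact List.Forall₂.cons ⟨u, v, rfl⟩ List.Forall₂.nil
  | ch :: ch' :: rest, u, v, pl, h => by
    rw [pathProds] at h
    rcases List.mem_append.1 h with h | h <;>
    · rcases List.mem_map.1 h with ⟨pl', hpl', rfl⟩
      exact List.Forall₂.cons ⟨u, _, rfl⟩
        (forall₂_of_mem_pathProds (ch' :: rest) _ v pl' hpl')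

lemma exists_of_forall₂ {α β : Type} {R : α → β → Prop} {l₁ : List α} {l₂ : List β}
    (h : List.Forall₂ R l₁ l₂) : ∀ a ∈ l₁, ∃ b ∈ l₂, R a b := by
  induction h with
  | nil => intro a ha; simp at ha
  | cons hr _ ih =>
    intro a ha
    rcases List.mem_cons.1 ha with rfl | ha
    · exact ⟨_, List.mem_cons_self, hr⟩
    · obtain ⟨b, hb, hrb⟩ := ih a ha
      exact ⟨b, List.mem_cons_of_mem _ hb, hrb⟩

lemma length_pathProds_le {F : Type} {d : ℕ}
    {g : List (Fin d) → Fin 2 → Fin 2 → Formula F (IMMVar d)} :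
    ∀ (chs : List (List (Fin d))) (u v : Fin 2),
      (pathProds g chs u v).length ≤ 2 ^ chs.length
  | [], _, _ => by simp [pathProds]
  | [ch], _, _ => by simp [pathProds]
  | ch :: ch' :: rest, u, v => by
    rw [pathProds]
    have h0 := length_pathProds_le (g := g) (ch' :: rest) 0 v
    have h1 := length_pathProds_le (g := g) (ch' :: rest) 1 v
    simp only [List.length_append, List.length_map, List.length_cons] at *
    have : 2 ^ (rest.length + 1 + 1) = 2 ^ (rest.length + 1) + 2 ^ (rest.length + 1) := by
      ring
    omega

lemma pathProds_poly_sum {F : Type} [CommSemiring F] {d : ℕ}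
    {g : List (Fin d) → Fin 2 → Fin 2 → Formula F (IMMVar d)} :
    ∀ (chs : List (List (Fin d))) (u v : Fin 2),
      (∀ ch ∈ chs, ∀ a b, (g ch a b).poly = Pm F d ch a b) →
      ((pathProds g chs u v).map (fun pl => (listProd pl).poly)).sum
        = (chs.map (Pm F d)).prod u v ∨ chs = []
  | [], u, v, hg => Or.inr rfl
  | [ch], u, v, hg => by
    left
    simp only [pathProds, List.map_cons, List.map_nil, List.sum_cons, List.sum_nil,
      List.prod_cons, List.prod_nil, add_zero, mul_one]
    rw [poly_listProd, List.map_cons, List.map_nil, List.prod_cons, List.prod_nil, mul_one,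
      hg ch (List.mem_singleton_self ch) u v]
  | ch :: ch' :: rest, u, v, hg => by
    left
    have hg' : ∀ c ∈ ch' :: rest, ∀ a b, (g c a b).poly = Pm F d c a b :=
      fun c hc => hg c (List.mem_cons_of_mem _ hc)
    have ih0 := pathProds_poly_sum (g := g) (ch' :: rest) 0 v hg'
    have ih1 := pathProds_poly_sum (g := g) (ch' :: rest) 1 v hg'
    rcases ih0 with ih0 | h; swap; · simp at h
    rcases ih1 with ih1 | h; swap; · simp at h
    rw [pathProds, List.map_append, List.sum_append, List.map_map, List.map_map]
    have key : ∀ w : Fin 2,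
        ((pathProds g (ch' :: rest) w v).map
          ((fun pl => (listProd pl).poly) ∘ (g ch u w :: ·))).sum
        = (g ch u w).poly * ((pathProds g (ch' :: rest) w v).map
            (fun pl => (listProd pl).poly)).sum := by
      intro w
      rw [← List.sum_map_mul_left]
      congr 1
      apply List.map_congr_left
      intro pl _
      simp only [Function.comp_apply, poly_listProd, List.map_cons, List.prod_cons]
    rw [key 0, key 1, ih0, ih1, hg ch (List.mem_cons_self) u 0,
      hg ch (List.mem_cons_self) u 1]
    conv_rhs => rw [List.map_cons, List.prod_cons, Matrix.mul_apply, Fin.sum_univ_two]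

/-! ### The recursive construction -/

/-- Depth-`Δ` syntactically multilinear formula for the `(u,v)` entry of the
product of the variable matrices along `l`, assuming `l.length ≤ k ^ Δ`. -/
def build (F : Type) [CommSemiring F] (d k : ℕ) :
    ℕ → List (Fin d) → Fin 2 → Fin 2 → Formula F (IMMVar d)
  | 0, l, u, v =>
    match l with
    | [] => .const (if u = v then 1 else 0)
    | [i] => .var (i, u, v)
    | _ :: _ :: _ => .const 0
  | Δ + 1, l, u, v =>
    listSum ((pathProds (build F d k Δ) (chunks (k ^ Δ) l) u v).map listProd)

lemma poly_build (F : Type) [CommSemiring F] (d k : ℕ) (hk : 1 ≤ k) :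
    ∀ (Δ : ℕ) (l : List (Fin d)) (u v : Fin 2), l ≠ [] → l.length ≤ k ^ Δ →
      (build F d k Δ l u v).poly = Pm F d l u v := by
  intro Δ
  induction Δ with
  | zero =>
    intro l u v hne hlen
    match l with
    | [] => exact absurd rfl hne
    | [i] =>
      show (X (i, u, v) : MvPolynomial (IMMVar d) F) = Pm F d [i] u v
      simp [Pm, IMMMat]
    | a :: b :: t => simp at hlen
  | succ Δ ih =>
    intro l u v hne hlen
    have hB : 1 ≤ k ^ Δ := Nat.one_le_pow _ _ hk
    set chs := chunks (k ^ Δ) l with hchs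
    have hflat : chs.flatten = l := chunks_flatten _ l
    have hchne : chs ≠ [] := by
      intro h
      rw [h] at hflat
      exact hne hflat.symm
    have hg : ∀ ch ∈ chs, ∀ a b, (build F d k Δ ch a b).poly = Pm F d ch a b := by
      intro ch hch a b
      obtain ⟨hchn, hchl⟩ := mem_chunks _ _ _ hch
      exact ih ch a b hchn (by rwa [Nat.max_eq_left hB] at hchl)
    show (listSum ((pathProds (build F d k Δ) chs u v).map listProd)).poly = _
    rw [poly_listSum, List.map_map]
    have := pathProds_poly_sum (g := build F d k Δ) chs u v hg
    rcases this with h | h; swap; · exact absurd h hchne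
    have hcomp : List.map (poly ∘ listProd) (pathProds (build F d k Δ) chs u v)
        = List.map (fun pl => (listProd pl).poly) (pathProds (build F d k Δ) chs u v) := rfl
    rw [hcomp, h, Pm_flatten, hflat]

lemma support_build (F : Type) [CommSemiring F] (d k : ℕ) :
    ∀ (Δ : ℕ) (l : List (Fin d)) (u v : Fin 2) (x : IMMVar d),
      x ∈ (build F d k Δ l u v).support → x.1 ∈ l := by
  intro Δ
  induction Δ with
  | zero =>
    intro l u v x hx
    match l with
    | [] => simp [build, Formula.support] at hx
    | [i] =>
      have : x ∈ ({(i, u, v)} : Finset (IMMVar d)) := hx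
      rw [Finset.mem_singleton] at this
      subst this
      simp
    | a :: b :: t => simp [build, Formula.support] at hx
  | succ Δ ih =>
    intro l u v x hx
    have hx' : x ∈ (listSum ((pathProds (build F d k Δ) (chunks (k ^ Δ) l) u v).map
        listProd)).support := hx
    obtain ⟨ψ, hψ, hxψ⟩ := support_listSum hx'
    obtain ⟨pl, hpl, rfl⟩ := List.mem_map.1 hψ
    obtain ⟨φ, hφ, hxφ⟩ := support_listProd hxψ
    obtain ⟨ch, hch, a, b, rfl⟩ := exists_of_forall₂
      (forall₂_of_mem_pathProds _ _ _ _ hpl) φ hφ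
    have : x.1 ∈ ch := ih ch a b x hxφ
    rw [← chunks_flatten (k ^ Δ) l]
    exact List.mem_flatten.2 ⟨ch, hch, this⟩

lemma depth_build (F : Type) [CommSemiring F] (d k : ℕ) :
    ∀ (Δ : ℕ) (l : List (Fin d)) (u v : Fin 2),
      (build F d k Δ l u v).productDepth ≤ Δ := by
  intro Δ
  induction Δ with
  | zero =>
    intro l u v
    match l with
    | [] => exact le_refl _
    | [i] => exact le_refl _
    | a :: b :: t => exact le_refl _
  | succ Δ ih =>
    intro l u v
    apply depth_listSum
    intro ψ hψ
    obtain ⟨pl, hpl, rfl⟩ := List.mem_map.1 hψ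
    have : ∀ φ ∈ pl, φ.productDepth ≤ Δ := by
      intro φ hφ
      obtain ⟨ch, _, a, b, rfl⟩ := exists_of_forall₂
        (forall₂_of_mem_pathProds _ _ _ _ hpl) φ hφ
      exact ih ch a b
    exact depth_listProd this

lemma syn_build (F : Type) [CommSemiring F] (d k : ℕ) :
    ∀ (Δ : ℕ) (l : List (Fin d)) (u v : Fin 2), l.Nodup →
      (build F d k Δ l u v).SynMultilinear := by
  intro Δ
  induction Δ with
  | zero =>
    intro l u v _
    match l with
    | [] => trivial
    | [i] => trivial
    | a :: b :: t => trivial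
  | succ Δ ih =>
    intro l u v hl
    apply syn_listSum
    intro ψ hψ
    obtain ⟨pl, hpl, rfl⟩ := List.mem_map.1 hψ
    obtain ⟨hnds, hpw⟩ := chunks_nodup_pairwise (B := k ^ Δ) hl
    have hfa := forall₂_of_mem_pathProds _ _ _ _ hpl
    apply syn_listProd
    · intro φ hφ
      obtain ⟨ch, hch, a, b, rfl⟩ := exists_of_forall₂ hfa φ hφ
      exact ih ch a b (hnds ch hch)
    · obtain ⟨hlen, hget⟩ := List.forall₂_iff_get.1 hfa
      intro i j hij
      have hind : ∀ i j : Fin pl.length, (i : ℕ) < (j : ℕ) →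
          Disjoint (pl.get i).support (pl.get j).support := by
        intro i j hlt
        obtain ⟨a, b, hab⟩ := hget i.1 i.2 (hlen ▸ i.2)
        obtain ⟨a', b', hab'⟩ := hget j.1 j.2 (hlen ▸ j.2)
        have hdisj : List.Disjoint ((chunks (k ^ Δ) l).get ⟨i.1, hlen ▸ i.2⟩)
            ((chunks (k ^ Δ) l).get ⟨j.1, hlen ▸ j.2⟩) :=
          List.pairwise_iff_get.1 hpw ⟨i.1, hlen ▸ i.2⟩ ⟨j.1, hlen ▸ j.2⟩ hlt
        rw [Finset.disjoint_left]
        intro x hxi hxj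
        have h1 : x.1 ∈ (chunks (k ^ Δ) l).get ⟨i.1, hlen ▸ i.2⟩ := by
          have := support_build F d k Δ _ a b x (by rw [← hab]; exact hxi)
          exact this
        have h2 : x.1 ∈ (chunks (k ^ Δ) l).get ⟨j.1, hlen ▸ j.2⟩ := by
          have := support_build F d k Δ _ a' b' x (by rw [← hab']; exact hxj)
          exact this
        exact hdisj h1 h2
      rcases lt_or_gt_of_ne (fun h => hij (Fin.ext (by exact_mod_cast congrArg Fin.val h))) with h | h
      · exact hind i j h
      · exact (hind j i h).symm

lemma size_build (F : Type) [CommSemiring F] (d k : ℕ) (hk : 1 ≤ k) :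
    ∀ (Δ : ℕ) (l : List (Fin d)) (u v : Fin 2), l.length ≤ k ^ Δ →
      (build F d k Δ l u v).size ≤ 2 ^ (3 * k * Δ) := by
  intro Δ
  induction Δ with
  | zero =>
    intro l u v _
    match l with
    | [] => simp [build, Formula.size]
    | [i] => simp [build, Formula.size]
    | a :: b :: t => simp [build, Formula.size]
  | succ Δ ih =>
    intro l u v hlen
    have hB : 1 ≤ k ^ Δ := Nat.one_le_pow _ _ hk
    set chs := chunks (k ^ Δ) l with hchs
    have hnum : chs.length ≤ k := by
      apply chunks_length_le hB k
      calc l.length ≤ k ^ (Δ + 1) := hlen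
        _ = k ^ Δ * k := pow_succ k Δ
    -- bound for each path product
    have hsizes : ∀ ψ ∈ (pathProds (build F d k Δ) chs u v).map listProd,
        Formula.size ψ ≤ 1 + k * 2 ^ (3 * k * Δ) := by
      intro ψ hψ
      obtain ⟨pl, hpl, rfl⟩ := List.mem_map.1 hψ
      have hfa := forall₂_of_mem_pathProds _ _ _ _ hpl
      have hplen : pl.length = chs.length := List.forall₂_iff_get.1 hfa |>.1
      have hent : ∀ φ ∈ pl, φ.size ≤ 2 ^ (3 * k * Δ) := by
        intro φ hφ
        obtain ⟨ch, hch, a, b, rfl⟩ := exists_of_forall₂ hfa φ hφ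
        obtain ⟨_, hchl⟩ := mem_chunks _ _ _ hch
        exact ih ch a b (by rwa [Nat.max_eq_left hB] at hchl)
      calc (listProd pl).size ≤ 1 + (pl.map Formula.size).sum := size_listProd pl
        _ ≤ 1 + pl.length * 2 ^ (3 * k * Δ) := by
            have := List.sum_le_card_nsmul (pl.map Formula.size) (2 ^ (3 * k * Δ)) (by
              intro x hx
              obtain ⟨φ, hφ, rfl⟩ := List.mem_map.1 hx
              exact hent φ hφ)
            simp only [List.length_map, smul_eq_mul] at this
            omega
        _ ≤ 1 + k * 2 ^ (3 * k * Δ) := by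
            have : pl.length ≤ k := hplen ▸ hnum
            exact Nat.add_le_add_left (Nat.mul_le_mul_right _ this) 1
    have hTotal : (build F d k (Δ + 1) l u v).size
        ≤ 1 + 2 ^ k * (1 + k * 2 ^ (3 * k * Δ)) := by
      calc (build F d k (Δ + 1) l u v).size
          ≤ 1 + (((pathProds (build F d k Δ) chs u v).map listProd).map Formula.size).sum :=
            size_listSum _
        _ ≤ 1 + ((pathProds (build F d k Δ) chs u v).map listProd).length
              * (1 + k * 2 ^ (3 * k * Δ)) := by
            have := List.sum_le_card_nsmul
              (((pathProds (build F d k Δ) chs u v).map listProd).map Formula.size)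
              (1 + k * 2 ^ (3 * k * Δ)) (by
                intro x hx
                obtain ⟨ψ, hψ, rfl⟩ := List.mem_map.1 hx
                exact hsizes ψ hψ)
            simp only [List.length_map, smul_eq_mul] at this ⊢
            omega
        _ ≤ 1 + 2 ^ k * (1 + k * 2 ^ (3 * k * Δ)) := by
            have h1 : (pathProds (build F d k Δ) chs u v).length ≤ 2 ^ chs.length :=
              length_pathProds_le chs u v
            have h2 : (2 : ℕ) ^ chs.length ≤ 2 ^ k := Nat.pow_le_pow_right (by norm_num) hnum
            have := le_trans h1 h2
            simp only [List.length_map]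
            exact Nat.add_le_add_left (Nat.mul_le_mul_right _ this) 1
    -- arithmetic: 1 + 2^k (1 + k 2^S) ≤ 2^(S + 3k) where S = 3kΔ
    have hkK : k ≤ 2 ^ k := (Nat.lt_two_pow_self (n := k)).le
    have hK2 : 2 ≤ 2 ^ k := by calc (2:ℕ) = 2 ^ 1 := rfl
                                    _ ≤ 2 ^ k := Nat.pow_le_pow_right (by norm_num) hk
    have hS1 : 1 ≤ 2 ^ (3 * k * Δ) := Nat.one_le_two_pow
    have harith : 1 + 2 ^ k * (1 + k * 2 ^ (3 * k * Δ))
        ≤ 2 ^ (3 * k * Δ) * (2 ^ k) ^ 3 := by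
      set K := 2 ^ k with hKdef
      set S := 2 ^ (3 * k * Δ) with hSdef
      have t2 : K ≤ K * S := Nat.le_mul_of_pos_right K (by omega)
      have t3 : K * k * S ≤ K * K * S := Nat.mul_le_mul_right S (Nat.mul_le_mul_left K hkK)
      have t4 : 1 + K + K * K ≤ K * K * K := by nlinarith
      calc 1 + K * (1 + k * S) = 1 + K + K * k * S := by ring
        _ ≤ S + K * S + K * K * S :=
            Nat.add_le_add (Nat.add_le_add hS1 t2) t3
        _ = S * (1 + K + K * K) := by ring
        _ ≤ S * (K * K * K) := Nat.mul_le_mul_left S t4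
        _ = S * K ^ 3 := by ring
    have hpow : 2 ^ (3 * k * Δ) * (2 ^ k) ^ 3 = 2 ^ (3 * k * (Δ + 1)) := by
      rw [← pow_mul, ← pow_add]
      ring_nf
    calc (build F d k (Δ + 1) l u v).size ≤ 1 + 2 ^ k * (1 + k * 2 ^ (3 * k * Δ)) := hTotal
      _ ≤ 2 ^ (3 * k * Δ) * (2 ^ k) ^ 3 := harith
      _ = 2 ^ (3 * k * (Δ + 1)) := hpow

end IMM3Aux


/-- There is an absolute constant `c > 0` such that for every field `F`,
every `d ≥ 2` and every `Δ` with `1 ≤ Δ ≤ log₂ d`, there is a syntactically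
multilinear formula over `F` of product-depth at most `Δ` and size at most
`2^(c·Δ·d^(1/Δ))` computing `IMM_d`. -/
theorem stmt_3 :
    ∃ c : ℝ, 0 < c ∧
      ∀ (F : Type) [Field F] (d : ℕ), 2 ≤ d →
        ∀ Δ : ℕ, 1 ≤ Δ → (Δ : ℝ) ≤ Real.logb 2 d →
          ∃ φ : Formula F (IMMVar d), φ.SynMultilinear ∧ φ.productDepth ≤ Δ ∧
            (φ.size : ℝ) ≤ (2 : ℝ) ^ (c * Δ * (d : ℝ) ^ (1 / (Δ : ℝ))) ∧
            φ.poly = IMMPoly F d := by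
  refine ⟨10, by norm_num, ?_⟩
  intro F _ d hd Δ hΔ _
  set r : ℝ := (d : ℝ) ^ (1 / (Δ : ℝ)) with hrdef
  have hΔ0 : (Δ : ℝ) ≠ 0 := Nat.cast_ne_zero.2 (by omega)
  have hd0 : (0 : ℝ) ≤ (d : ℝ) := by positivity
  have hr1 : (1 : ℝ) ≤ r := Real.one_le_rpow (by exact_mod_cast (by omega : 1 ≤ d)) (by positivity)
  set k := ⌈r⌉₊ with hkdef
  have hk1 : 1 ≤ k := Nat.one_le_ceil_iff.2 (by linarith)
  have hdr : (d : ℝ) = r ^ Δ := by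
    rw [hrdef, ← Real.rpow_natCast ((d : ℝ) ^ (1 / (Δ : ℝ))) Δ, ← Real.rpow_mul hd0,
      one_div, inv_mul_cancel₀ hΔ0, Real.rpow_one]
  have hdk : d ≤ k ^ Δ := by
    have : (d : ℝ) ≤ ((k : ℝ)) ^ Δ := by
      rw [hdr]
      exact pow_le_pow_left₀ (by linarith) (Nat.le_ceil r) Δ
    exact_mod_cast this
  have hlenfin : (List.finRange d).length ≤ k ^ Δ := by
    simpa using hdk
  have hfinne : List.finRange d ≠ [] := by
    apply List.ne_nil_of_length_pos
    simp
    omega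
  refine ⟨.sum (n := 1) (fun i : Fin 2 => IMM3Aux.build F d k Δ (List.finRange d) 0 i),
    ?_, ?_, ?_, ?_⟩
  · exact fun i => IMM3Aux.syn_build F d k Δ _ 0 i (List.nodup_finRange d)
  · exact Finset.sup_le fun i _ => IMM3Aux.depth_build F d k Δ _ 0 i
  · -- size bound
    have hchild : ∀ i : Fin 2,
        (IMM3Aux.build F d k Δ (List.finRange d) 0 i).size ≤ 2 ^ (3 * k * Δ) :=
      fun i => IMM3Aux.size_build F d k hk1 Δ _ 0 i hlenfin
    have hS1 : 1 ≤ 2 ^ (3 * k * Δ) := Nat.one_le_two_pow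
    have hkΔ : 1 ≤ k * Δ := Nat.one_le_iff_ne_zero.2 (by positivity)
    have hsz : (Formula.sum (n := 1)
        (fun i : Fin 2 => IMM3Aux.build F d k Δ (List.finRange d) 0 i)).size
        ≤ 2 ^ (5 * k * Δ) := by
      show 1 + (∑ i : Fin 2, (IMM3Aux.build F d k Δ (List.finRange d) 0 i).size) ≤ _
      rw [Fin.sum_univ_two]
      have h0 := hchild 0
      have h1 := hchild 1
      have h4 : 1 + ((IMM3Aux.build F d k Δ (List.finRange d) 0 0).size
          + (IMM3Aux.build F d k Δ (List.finRange d) 0 1).size)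
          ≤ 4 * 2 ^ (3 * k * Δ) := by omega
      have h5 : 4 * 2 ^ (3 * k * Δ) = 2 ^ (3 * k * Δ + 2) := by
        rw [pow_add]
        ring
      have h6 : 3 * k * Δ + 2 ≤ 5 * k * Δ := by nlinarith
      calc 1 + ((IMM3Aux.build F d k Δ (List.finRange d) 0 0).size
            + (IMM3Aux.build F d k Δ (List.finRange d) 0 1).size)
          ≤ 2 ^ (3 * k * Δ + 2) := by omega
        _ ≤ 2 ^ (5 * k * Δ) := Nat.pow_le_pow_right (by norm_num) h6
    have hcastsz : ((Formula.sum (n := 1)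
        (fun i : Fin 2 => IMM3Aux.build F d k Δ (List.finRange d) 0 i)).size : ℝ)
        ≤ (2 : ℝ) ^ (((5 * k * Δ : ℕ) : ℝ)) := by
      rw [Real.rpow_natCast]
      exact_mod_cast hsz
    refine hcastsz.trans (Real.rpow_le_rpow_of_exponent_le (by norm_num) ?_)
    have hkr : (k : ℝ) ≤ 2 * r := by
      have := Nat.ceil_lt_add_one (le_trans zero_le_one hr1)
      have : (k : ℝ) < r + 1 := this
      linarith
    have hΔ1 : (1 : ℝ) ≤ (Δ : ℝ) := by exact_mod_cast hΔ
    push_cast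
    nlinarith
  · -- the computed polynomial
    show (∑ i : Fin 2, (IMM3Aux.build F d k Δ (List.finRange d) 0 i).poly) = IMMPoly F d
    rw [Fin.sum_univ_two,
      IMM3Aux.poly_build F d k hk1 Δ _ 0 0 hfinne hlenfin,
      IMM3Aux.poly_build F d k hk1 Δ _ 0 1 hfinne hlenfin]
    simp [IMM3Aux.Pm, IMMPoly, List.ofFn_eq_map]
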